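/- Suppose 0 ≤ Δ ≤ γ·(I − γP)^{-1}(P_1(E) + P_2(E)) pointwise, where γ ∈ (0,1), P, P_1, P_2 are monotone linear operators preserving constants (P1 = 1, etc.) and nonnegativity, E is a nonnegative bounded function with μ-weighted L² norm ‖E‖_μ' ≤ ε for every probability measure μ' (in particular sup-bounded by ε). Then ‖Δ‖_μ ≤ (2γ/(1−γ))·√2·ε for any probability measure μ. -/

import Mathlib

open MeasureTheory

/-- Bound on the decentralized-computation error term:
if `0 ≤ Δ ≤ γ (I − γP)⁻¹ (P₁ E + P₂ E)` pointwise, where `P, P₁, P₂` are monotone unital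
linear operators, `R` is the two-sided inverse of `I − γ P`, `R` is monotone, `E ≥ 0` is
bounded with `‖E‖_{μ'} ≤ ε` for every probability measure `μ'`, then
`‖Δ‖_μ ≤ (2γ/(1−γ))·√2·ε`. -/
theorem decentralized_error_term_bound {X : Type*} [MeasurableSpace X] (μ : Measure X)
    [IsProbabilityMeasure μ] (γ : ℝ) (h0 : 0 < γ) (h1 : γ < 1)
    (P P₁ P₂ R : (X → ℝ) →ₗ[ℝ] (X → ℝ))
    (hPmono : ∀ f g : X → ℝ, (∀ x, f x ≤ g x) → ∀ x, P f x ≤ P g x)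
    (hP₁mono : ∀ f g : X → ℝ, (∀ x, f x ≤ g x) → ∀ x, P₁ f x ≤ P₁ g x)
    (hP₂mono : ∀ f g : X → ℝ, (∀ x, f x ≤ g x) → ∀ x, P₂ f x ≤ P₂ g x)
    (hP1 : P (fun _ => (1 : ℝ)) = fun _ => (1 : ℝ))
    (hP₁1 : P₁ (fun _ => (1 : ℝ)) = fun _ => (1 : ℝ))
    (hP₂1 : P₂ (fun _ => (1 : ℝ)) = fun _ => (1 : ℝ))
    (hRinv₁ : R.comp (LinearMap.id - γ • P) = LinearMap.id)
    (hRinv₂ : (LinearMap.id - γ • P).comp R = LinearMap.id)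
    (hRmono : ∀ f g : X → ℝ, (∀ x, f x ≤ g x) → ∀ x, R f x ≤ R g x)
    (Δ E : X → ℝ) (ε : ℝ) (hε : 0 ≤ ε) (hEm : Measurable E)
    (hE0 : ∀ x, 0 ≤ E x) (hEb : ∃ C, ∀ x, E x ≤ C)
    (hEnorm : ∀ μ' : Measure X, IsProbabilityMeasure μ' →
      Real.sqrt (∫ x, E x ^ 2 ∂μ') ≤ ε)
    (hΔ0 : ∀ x, 0 ≤ Δ x)
    (hΔ : ∀ x, Δ x ≤ γ * R (fun y => P₁ E y + P₂ E y) x) :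
    Real.sqrt (∫ x, Δ x ^ 2 ∂μ) ≤ (2 * γ / (1 - γ)) * Real.sqrt 2 * ε := by

  have h1g : (0:ℝ) < 1 - γ := by linarith
  -- pointwise bound on E via Dirac measures
  have hEpt : ∀ x, E x ≤ ε := by
    intro x
    have := hEnorm (Measure.dirac x) inferInstance
    rwa [integral_dirac' _ _ ((hEm.pow_const 2).stronglyMeasurable),
      Real.sqrt_sq (hE0 x)] at this
  -- R of the constant 2ε
  have hRconst : R (fun _ => 2 * ε) = fun _ => 2 * ε / (1 - γ) := by
    have hg : (LinearMap.id - γ • P : (X → ℝ) →ₗ[ℝ] X → ℝ) (fun _ => 2 * ε / (1 - γ))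
        = fun _ => 2 * ε := by
      have hPx : P (fun _ => 2 * ε / (1 - γ)) = fun _ => 2 * ε / (1 - γ) := by
        have h : (fun _ => 2 * ε / (1 - γ) : X → ℝ) = (2 * ε / (1 - γ)) • (fun _ => (1:ℝ)) := by
          funext z; simp
        rw [h, LinearMap.map_smul, hP1]
      funext x
      simp only [LinearMap.sub_apply, LinearMap.id_apply, LinearMap.smul_apply,
        Pi.sub_apply, Pi.smul_apply, smul_eq_mul, hPx]
      field_simp
    calc R (fun _ => 2 * ε)
        = R ((LinearMap.id - γ • P : (X → ℝ) →ₗ[ℝ] X → ℝ) (fun _ => 2 * ε / (1 - γ))) := by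
          rw [hg]
      _ = (R.comp (LinearMap.id - γ • P)) (fun _ => 2 * ε / (1 - γ)) := rfl
      _ = fun _ => 2 * ε / (1 - γ) := by rw [hRinv₁]; rfl
  -- pointwise bound on Δ
  set c : ℝ := 2 * γ * ε / (1 - γ) with hc
  have hc0 : 0 ≤ c := by
    apply div_nonneg _ h1g.le
    positivity
  have hΔc : ∀ x, Δ x ≤ c := by
    intro x
    have hsum : ∀ y, P₁ E y + P₂ E y ≤ (fun _ => 2 * ε) y := by
      intro y
      have h1 : P₁ E y ≤ ε := by
        have := hP₁mono E (fun _ => ε) hEpt y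
        have heq : (fun _ => ε : X → ℝ) = ε • (fun _ => (1:ℝ)) := by funext z; simp
        rw [heq, LinearMap.map_smul] at this
        simpa [hP₁1] using this
      have h2 : P₂ E y ≤ ε := by
        have := hP₂mono E (fun _ => ε) hEpt y
        have heq : (fun _ => ε : X → ℝ) = ε • (fun _ => (1:ℝ)) := by funext z; simp
        rw [heq, LinearMap.map_smul] at this
        simpa [hP₂1] using this
      simpa [two_mul] using add_le_add h1 h2
    have hR := hRmono _ _ hsum x
    rw [hRconst] at hR
    calc Δ x ≤ γ * R (fun y => P₁ E y + P₂ E y) x := hΔ x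
      _ ≤ γ * (2 * ε / (1 - γ)) := by
          exact mul_le_mul_of_nonneg_left hR h0.le
      _ = c := by rw [hc]; field_simp
  -- integral bound
  have hbound : ∀ x, ‖Δ x ^ 2‖ ≤ c ^ 2 := by
    intro x
    rw [Real.norm_eq_abs, abs_of_nonneg (sq_nonneg _)]
    exact pow_le_pow_left₀ (hΔ0 x) (hΔc x) 2
  have hint : ‖∫ x, Δ x ^ 2 ∂μ‖ ≤ c ^ 2 * (μ Set.univ).toReal :=
    norm_integral_le_of_norm_le_const (Filter.Eventually.of_forall hbound)
  rw [measure_univ, ENNReal.toReal_one, mul_one] at hint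
  have hint' : ∫ x, Δ x ^ 2 ∂μ ≤ c ^ 2 := le_trans (le_abs_self _) hint
  have hsqrt : Real.sqrt (∫ x, Δ x ^ 2 ∂μ) ≤ c := by
    calc Real.sqrt (∫ x, Δ x ^ 2 ∂μ) ≤ Real.sqrt (c ^ 2) := Real.sqrt_le_sqrt hint'
      _ = c := Real.sqrt_sq hc0
  refine hsqrt.trans ?_
  have h2 : (1:ℝ) ≤ Real.sqrt 2 := by
    rw [show (1:ℝ) = Real.sqrt 1 by simp]
    exact Real.sqrt_le_sqrt (by norm_num)
  have hpos : (0:ℝ) ≤ 2 * γ / (1 - γ) * ε := by positivity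
  calc c = (2 * γ / (1 - γ)) * ε * 1 := by rw [hc]; ring
    _ ≤ (2 * γ / (1 - γ)) * ε * Real.sqrt 2 := by nlinarith
    _ = (2 * γ / (1 - γ)) * Real.sqrt 2 * ε := by ring
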